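/- Zero-sum minimax for the bias game: for the payoff f(w,a) = (wᵀa)², min over w in the simplex of max over a in the box Π[−τₖ,τₖ] of f(w,a) equals (min_k τₖ)². That is, the value of the sensor-fusion/data-injection game with squared-bias regret is the square of the smallest attack threshold. -/
import Mathlib


/-- Zero-sum minimax value of the sensor-fusion/data-injection game with
squared-bias payoff: `min_w max_a (wᵀa)² = (min_k τₖ)²`. -/
theorem minimax_bias_game (tau : Fin 4 → ℝ) (htau : ∀ k, 0 < tau k) :
    IsLeast {m : ℝ | ∃ w : Fin 4 → ℝ, (∀ k, 0 ≤ w k) ∧ (∑ k, w k = 1) ∧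
        IsGreatest {y : ℝ | ∃ a : Fin 4 → ℝ, (∀ k, |a k| ≤ tau k) ∧
          y = (∑ k, w k * a k) ^ 2} m}
      ((Finset.univ.inf' Finset.univ_nonempty tau) ^ 2) := by
  set t := Finset.univ.inf' Finset.univ_nonempty tau with ht
  obtain ⟨k₀, -, hk₀'⟩ := Finset.exists_mem_eq_inf' Finset.univ_nonempty tau
  have hk₀ : t = tau k₀ := ht.trans hk₀'
  have ht0 : 0 < t := hk₀ ▸ htau k₀
  have htle : ∀ k, t ≤ tau k := fun k => Finset.inf'_le _ (Finset.mem_univ k)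
  have hsum : ∀ a : Fin 4 → ℝ, (∑ k, (if k = k₀ then (1:ℝ) else 0) * a k) = a k₀ := by
    intro a; simp [ite_mul]
  constructor
  · refine ⟨fun k => if k = k₀ then 1 else 0, fun k => by positivity, by simp, ?_, ?_⟩
    · exact ⟨tau, fun k => by rw [abs_of_pos (htau k)], by rw [hsum, hk₀]⟩
    · rintro y ⟨a, ha, rfl⟩
      rw [hsum, hk₀]
      calc a k₀ ^ 2 = |a k₀| ^ 2 := (sq_abs _).symm
        _ ≤ tau k₀ ^ 2 := pow_le_pow_left₀ (abs_nonneg _) (ha k₀) 2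
  · rintro m ⟨w, hw0, hw1, hgr⟩
    have hmem : (∑ k, w k * tau k) ^ 2 ∈ {y : ℝ | ∃ a : Fin 4 → ℝ, (∀ k, |a k| ≤ tau k) ∧
          y = (∑ k, w k * a k) ^ 2} :=
      ⟨tau, fun k => by rw [abs_of_pos (htau k)], rfl⟩
    have hle : t ≤ ∑ k, w k * tau k := by
      calc t = ∑ k, w k * t := by rw [← Finset.sum_mul, hw1, one_mul]
        _ ≤ ∑ k, w k * tau k :=
          Finset.sum_le_sum fun k _ => mul_le_mul_of_nonneg_left (htle k) (hw0 k)
    calc t ^ 2 ≤ (∑ k, w k * tau k) ^ 2 := pow_le_pow_left₀ ht0.le hle 2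
      _ ≤ m := hgr.2 hmem
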